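/- Let O be a complete discrete valuation ring with finite residue field, F its field of fractions, and μ_n the group of n-th roots of unity in F. Then the quotient Hom(O^×, ℂ^×)/Hom(O^×, ℂ^×)^n of the character group of O^× by its subgroup of n-th powers is isomorphic to Hom(μ_n, ℂ^×); in particular its order equals |μ_n|. -/

import Mathlib

noncomputable instance : RootableBy ℂˣ ℕ :=
  rootableByOfPowLeftSurj _ _ (fun {n} hn x => by
    obtain ⟨z, hz⟩ := IsAlgClosed.exists_pow_nat_eq (x : ℂ) (Nat.pos_of_ne_zero hn)
    have hz0 : z ≠ 0 := by
      rintro rfl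
      rw [zero_pow hn] at hz
      exact x.ne_zero hz.symm
    exact ⟨Units.mk0 z hz0, Units.ext (by simpa using hz)⟩)

noncomputable instance : RootableBy ℂˣ ℤ := Group.rootableByIntOfRootableByNat ℂˣ

noncomputable instance : DivisibleBy (Additive ℂˣ) ℤ where
  div a n := Additive.ofMul (RootableBy.root a.toMul n)
  div_zero a := congrArg Additive.ofMul (RootableBy.root_zero _)
  div_cancel {n} a hn := congrArg Additive.ofMul (RootableBy.root_cancel a.toMul hn)

lemma exists_mextension {G : Type*} [CommGroup G] (H : Subgroup G) (φ : ↥H →* ℂˣ) :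
    ∃ ψ : G →* ℂˣ, ∀ x : ↥H, ψ x = φ x := by
  have hb : Module.Baer ℤ (Additive ℂˣ) := Module.Baer.of_divisible _
  obtain ⟨h, hh⟩ := hb.extension_property_addMonoidHom
    (MonoidHom.toAdditive H.subtype) (H.subtype_injective) (MonoidHom.toAdditive φ)
  exact ⟨MonoidHom.toAdditive.symm h, fun x => DFunLike.congr_fun hh x⟩

lemma key_quot_iso {G : Type*} [CommGroup G] (n : ℕ) (H : Subgroup G)
    (hH : ∀ x : G, x ∈ H ↔ x ^ n = 1) :
    Nonempty (((G →* ℂˣ) ⧸ MonoidHom.range (G := G →* ℂˣ) (powMonoidHom n)) ≃* (↥H →* ℂˣ)) := by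
  let res : (G →* ℂˣ) →* (↥H →* ℂˣ) :=
    { toFun := fun φ => φ.comp H.subtype
      map_one' := rfl
      map_mul' := fun _ _ => rfl }
  have hsurj : Function.Surjective res := by
    intro φ
    obtain ⟨ψ, hψ⟩ := exists_mextension H φ
    exact ⟨ψ, MonoidHom.ext hψ⟩
  have hker : MonoidHom.range (G := G →* ℂˣ) (powMonoidHom n) = res.ker := by
    ext φ
    constructor
    · rintro ⟨χ, rfl⟩
      rw [MonoidHom.mem_ker]
      refine MonoidHom.ext fun x => ?_
      have hx : (x : G) ^ n = 1 := (hH x).mp x.2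
      show (χ ^ n) (x : G) = 1
      rw [MonoidHom.pow_apply, ← map_pow, hx, map_one]
    · intro hφ
      have hφ' : ∀ x : ↥H, φ (x : G) = 1 := by
        intro x
        have h0 : res φ = 1 := hφ
        have := DFunLike.congr_fun h0 x
        exact this
      set f : G →* G := powMonoidHom n with hf
      have hKf : f.ker ≤ φ.ker := by
        intro x hx
        rw [MonoidHom.mem_ker] at hx ⊢
        rw [hf, powMonoidHom_apply] at hx
        exact hφ' ⟨x, (hH x).mpr hx⟩
      let φ' := QuotientGroup.lift f.ker φ hKf
      let e := QuotientGroup.quotientKerEquivRange f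
      obtain ⟨χ, hχ⟩ := exists_mextension f.range (φ'.comp e.symm.toMonoidHom)
      refine ⟨χ, MonoidHom.ext fun x => ?_⟩
      have hmem : x ^ n ∈ f.range := ⟨x, rfl⟩
      have h1 : (powMonoidHom n : (G →* ℂˣ) →* (G →* ℂˣ)) χ x = χ (x ^ n) := by
        rw [powMonoidHom_apply, MonoidHom.pow_apply, ← map_pow]
      rw [h1]
      have h2 : χ (x ^ n) = φ' (e.symm ⟨x ^ n, hmem⟩) := hχ ⟨x ^ n, hmem⟩
      have h3 : e.symm ⟨x ^ n, hmem⟩ = QuotientGroup.mk x := by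
        rw [MulEquiv.symm_apply_eq]
        rfl
      rw [h2]
      have h4 : φ' (QuotientGroup.mk x : G ⧸ f.ker) = φ x := rfl
      exact (congrArg φ' h3).trans h4
  exact ⟨(@QuotientGroup.quotientMulEquivOfEq _ _ _ _ (by rw [hker]; infer_instance) inferInstance hker).trans
    (QuotientGroup.quotientKerEquivOfSurjective res hsurj)⟩

lemma rootsOfUnity_fractionRing_equiv (O : Type*) [CommRing O] [IsDomain O]
    [IsIntegrallyClosed O] (n : ℕ) (hn : 1 ≤ n) :
    Nonempty (↥(rootsOfUnity n O) ≃* ↥(rootsOfUnity n (FractionRing O))) := by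
  let F := FractionRing O
  have hinj : Function.Injective (algebraMap O F) := IsFractionRing.injective O F
  refine ⟨MulEquiv.ofBijective (restrictRootsOfUnity (algebraMap O F) n) ⟨?_, ?_⟩⟩
  · intro ξ ξ' h
    have h1 : (algebraMap O F) ((ξ : Oˣ) : O) = (algebraMap O F) ((ξ' : Oˣ) : O) := by
      have := congrArg (fun z => (((z : ↥(rootsOfUnity n F)) : Fˣ) : F)) h
      simpa using this
    exact Subtype.ext (Units.ext (hinj h1))
  · intro ζ
    have hζ : ((ζ : Fˣ) : F) ^ n = 1 := by
      have := (mem_rootsOfUnity n (ζ : Fˣ)).mp ζ.2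
      simpa using congrArg (Units.val) this
    have hζi : (((ζ : Fˣ)⁻¹ : Fˣ) : F) ^ n = 1 := by
      have : ((ζ : Fˣ)⁻¹) ^ n = 1 := by
        rw [inv_pow, (mem_rootsOfUnity n (ζ : Fˣ)).mp ζ.2, inv_one]
      simpa using congrArg (Units.val) this
    have hint : ∀ x : F, x ^ n = 1 → IsIntegral O x := by
      intro x hx
      refine ⟨Polynomial.X ^ n - Polynomial.C 1, Polynomial.monic_X_pow_sub_C 1 (by omega), ?_⟩
      simp [Polynomial.eval₂, hx]
    obtain ⟨y, hy⟩ := IsIntegrallyClosed.isIntegral_iff.mp (hint _ hζ)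
    obtain ⟨z, hz⟩ := IsIntegrallyClosed.isIntegral_iff.mp (hint _ hζi)
    have hyz : y * z = 1 := by
      apply hinj
      rw [map_mul, hy, hz, map_one]
      exact_mod_cast Units.mul_inv (ζ : Fˣ)
    let u : Oˣ := Units.mkOfMulEqOne y z hyz
    have hu : u ∈ rootsOfUnity n O := by
      rw [mem_rootsOfUnity]
      refine Units.ext ?_
      have : y ^ n = 1 := by
        apply hinj
        rw [map_pow, hy, map_one, hζ]
      simpa [u] using this
    refine ⟨⟨u, hu⟩, ?_⟩
    refine Subtype.ext (Units.ext ?_)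
    simpa [u] using hy

/-- Let `O` be a complete discrete valuation ring with finite residue field, `F` its
fraction field and `μₙ` the group of `n`-th roots of unity of `F`.  Then the quotient of
the character group `Hom(O^×, ℂ^×)` by its subgroup of `n`-th powers is isomorphic to
`Hom(μₙ, ℂ^×)`; in particular its order equals `|μₙ|`. -/
theorem characterGroup_quotient_npow_iso_characters_rootsOfUnity
    (O : Type*) [CommRing O] [IsDomain O] [IsDiscreteValuationRing O]
    [IsAdicComplete (IsLocalRing.maximalIdeal O) O]
    [Finite (IsLocalRing.ResidueField O)]
    (n : ℕ) (hn : 1 ≤ n) :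
    Nonempty
        (((Oˣ →* ℂˣ) ⧸ MonoidHom.range (G := Oˣ →* ℂˣ) (powMonoidHom n)) ≃*
          (↥(rootsOfUnity n (FractionRing O)) →* ℂˣ)) ∧
      Nat.card ((Oˣ →* ℂˣ) ⧸ MonoidHom.range (G := Oˣ →* ℂˣ) (powMonoidHom n)) =
        Nat.card ↥(rootsOfUnity n (FractionRing O)) := by
  haveI : NeZero n := ⟨by omega⟩
  obtain ⟨e0⟩ := key_quot_iso n (rootsOfUnity n O) (fun x => mem_rootsOfUnity n x)
  obtain ⟨e1⟩ := rootsOfUnity_fractionRing_equiv O n hn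
  let e2 : (↥(rootsOfUnity n O) →* ℂˣ) ≃* (↥(rootsOfUnity n (FractionRing O)) →* ℂˣ) :=
    MulEquiv.monoidHomCongrLeft e1
  let e := e0.trans e2
  refine ⟨⟨e⟩, ?_⟩
  set G' := ↥(rootsOfUnity n (FractionRing O)) with hG'
  haveI : Finite G' := inferInstance
  haveI : NeZero ((Monoid.exponent G' : ℂ)) :=
    ⟨Nat.cast_ne_zero.mpr Monoid.exponent_ne_zero_of_finite⟩
  obtain ⟨e3⟩ := CommGroup.monoidHom_mulEquiv_of_hasEnoughRootsOfUnity G' ℂ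
  calc Nat.card ((Oˣ →* ℂˣ) ⧸ MonoidHom.range (G := Oˣ →* ℂˣ) (powMonoidHom n))
      = Nat.card (G' →* ℂˣ) := Nat.card_congr e.toEquiv
    _ = Nat.card G' := Nat.card_congr e3.toEquiv
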